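/- Let κ, α, a, m ∈ ℝ with m ≠ −1. Suppose u : ℝ → ℝ → ℝ is C² on ℝ × (0,∞), α + u_r(t,r) ≠ 0 for all t ∈ ℝ and r > 0, and u satisfies u_t(t,r) = κ·(u_rr(t,r) − (m/r)·(α + u_r(t,r)))/(α + u_r(t,r))² + a for all t ∈ ℝ and r > 0. Suppose w : ℝ → ℝ → ℝ is C² on ℝ² and satisfies the hodograph relation w(t, α·r + u(t,r)) = r^(m+1)/(m+1) for all t ∈ ℝ and r > 0. Then for all t ∈ ℝ and r > 0, setting z = α·r + u(t,r), one has w_t(t,z) = κ·w_zz(t,z) − a·w_z(t,z); that is, w satisfies a linear diffusion equation at every point in the image of the map (t,r) ↦ (t, α·r + u(t,r)). -/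

import Mathlib

noncomputable section

/-- Partial derivative in the first (time) variable. -/
def partial_t (u : ℝ → ℝ → ℝ) (t r : ℝ) : ℝ := deriv (fun s => u s r) t

/-- Partial derivative in the second (space) variable. -/
def partial_r (u : ℝ → ℝ → ℝ) (t r : ℝ) : ℝ := deriv (fun s => u t s) r

/-- Second partial derivative in the second (space) variable. -/
def partial_rr (u : ℝ → ℝ → ℝ) (t r : ℝ) : ℝ := deriv (deriv (fun s => u t s)) r

/-- Mixed partial derivative: first in space, then in time. -/
def partial_tr (u : ℝ → ℝ → ℝ) (t r : ℝ) : ℝ := deriv (fun s => deriv (fun y => u s y) r) t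

/-- `u` is C² on ℝ × (0,∞): `u`, `u_t`, `u_r`, `u_rr` and the mixed partial `u_tr`
exist and are continuous there. -/
def IsC2On (u : ℝ → ℝ → ℝ) : Prop :=
  (∀ t r : ℝ, 0 < r → DifferentiableAt ℝ (fun s => u s r) t) ∧
  (∀ t r : ℝ, 0 < r → DifferentiableAt ℝ (fun s => u t s) r) ∧
  (∀ t r : ℝ, 0 < r → DifferentiableAt ℝ (deriv (fun s => u t s)) r) ∧
  (∀ t r : ℝ, 0 < r → DifferentiableAt ℝ (fun s => deriv (fun y => u s y) r) t) ∧
  ContinuousOn (fun q : ℝ × ℝ => u q.1 q.2) {q : ℝ × ℝ | 0 < q.2} ∧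
  ContinuousOn (fun q : ℝ × ℝ => partial_t u q.1 q.2) {q : ℝ × ℝ | 0 < q.2} ∧
  ContinuousOn (fun q : ℝ × ℝ => partial_r u q.1 q.2) {q : ℝ × ℝ | 0 < q.2} ∧
  ContinuousOn (fun q : ℝ × ℝ => partial_rr u q.1 q.2) {q : ℝ × ℝ | 0 < q.2} ∧
  ContinuousOn (fun q : ℝ × ℝ => partial_tr u q.1 q.2) {q : ℝ × ℝ | 0 < q.2}

/-- Hodograph transformation: the equation with diffusivity `h(v) = -κ/(α+v)` and
constant source `a` is mapped to a linear diffusion equation. -/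
theorem hodograph_alpha (κ α a m : ℝ) (hm : m ≠ -1)
    (u : ℝ → ℝ → ℝ) (hu : IsC2On u)
    (hur : ∀ t r : ℝ, 0 < r → α + partial_r u t r ≠ 0)
    (hpde : ∀ t r : ℝ, 0 < r →
      partial_t u t r
        = κ * (partial_rr u t r - (m / r) * (α + partial_r u t r))
            / (α + partial_r u t r) ^ 2 + a)
    (w : ℝ → ℝ → ℝ) (hw : ContDiff ℝ 2 (Function.uncurry w))
    (hhod : ∀ t r : ℝ, 0 < r → w t (α * r + u t r) = r ^ (m + 1) / (m + 1)) :
    ∀ t r : ℝ, 0 < r →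
      partial_t w t (α * r + u t r)
        = κ * partial_rr w t (α * r + u t r) - a * partial_r w t (α * r + u t r) := by
  obtain ⟨hut, hurd, hurr, -, -, -, -, -, -⟩ := hu
  intro t r hr
  have hm1 : m + 1 ≠ 0 := fun h => hm (by linarith)
  set z := α * r + u t r with hz
  set f := Function.uncurry w with hf
  have hfd : Differentiable ℝ f := hw.differentiable two_ne_zero
  -- the slice W = w t ·
  have hWc : ContDiff ℝ 2 (fun y => w t y) := by
    have h : (fun y => w t y) = f ∘ (fun y => ((t : ℝ), y)) := rfl
    rw [h]
    exact hw.comp (contDiff_const.prodMk contDiff_id)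
  have hWd : Differentiable ℝ (fun y => w t y) := hWc.differentiable two_ne_zero
  have hW'c : ContDiff ℝ 1 (deriv (fun y => w t y)) :=
    ((contDiff_succ_iff_deriv (n := 1)).mp (by exact_mod_cast hWc)).2.2
  have hW'd : Differentiable ℝ (deriv (fun y => w t y)) := hW'c.differentiable one_ne_zero
  -- inner radial map derivative, for any s > 0
  have hA : ∀ s : ℝ, 0 < s →
      HasDerivAt (fun y => α * y + u t y) (α + partial_r u t s) s := by
    intro s hs
    have h1 : HasDerivAt (fun y : ℝ => α * y) α s := by
      simpa using (hasDerivAt_id s).const_mul α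
    exact h1.add (hurd t s hs).hasDerivAt
  -- Step A : w_z(t, zs) * (α + u_r) = s ^ m for all s > 0
  have e2all : ∀ s : ℝ, 0 < s →
      deriv (fun y => w t y) (α * s + u t s) * (α + partial_r u t s) = s ^ m := by
    intro s hs
    have hcomp : HasDerivAt (fun y => w t (α * y + u t y))
        (deriv (fun y => w t y) (α * s + u t s) * (α + partial_r u t s)) s :=
      ((hWd _).hasDerivAt).comp s (hA s hs)
    have hrpow : HasDerivAt (fun x : ℝ => x ^ (m + 1) / (m + 1)) (s ^ m) s := by
      have h := (Real.hasDerivAt_rpow_const (x := s) (p := m + 1) (Or.inl hs.ne')).div_const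
        (m + 1)
      have h2 : (m + 1) * s ^ (m + 1 - 1) / (m + 1) = s ^ m := by
        rw [show m + 1 - 1 = m by ring]
        field_simp
      rwa [h2] at h
    have heq : (fun y => w t (α * y + u t y)) =ᶠ[nhds s] (fun x : ℝ => x ^ (m + 1) / (m + 1)) := by
      filter_upwards [Ioi_mem_nhds hs] with y hy using hhod t y hy
    exact ((hrpow.congr_of_eventuallyEq heq).unique hcomp).symm
  -- Step B : second derivative relation
  have e3 : deriv (deriv (fun y => w t y)) z * (α + partial_r u t r) * (α + partial_r u t r)
      + deriv (fun y => w t y) z * partial_rr u t r = m * r ^ (m - 1) := by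
    have h1 : HasDerivAt (fun s => deriv (fun y => w t y) (α * s + u t s))
        (deriv (deriv (fun y => w t y)) z * (α + partial_r u t r)) r :=
      (((hW'd z).hasDerivAt).comp r (hA r hr) :)
    have h2 : HasDerivAt (fun s => α + partial_r u t s) (partial_rr u t r) r :=
      (hurr t r hr).hasDerivAt.const_add α
    have hP : HasDerivAt
        (fun s => deriv (fun y => w t y) (α * s + u t s) * (α + partial_r u t s))
        (deriv (deriv (fun y => w t y)) z * (α + partial_r u t r) * (α + partial_r u t r)
          + deriv (fun y => w t y) z * partial_rr u t r) r := h1.mul h2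
    have hrpow : HasDerivAt (fun x : ℝ => x ^ m) (m * r ^ (m - 1)) r :=
      Real.hasDerivAt_rpow_const (Or.inl hr.ne')
    have heq : (fun s => deriv (fun y => w t y) (α * s + u t s) * (α + partial_r u t s))
        =ᶠ[nhds r] (fun x : ℝ => x ^ m) := by
      filter_upwards [Ioi_mem_nhds hr] with y hy using e2all y hy
    exact ((hrpow.congr_of_eventuallyEq heq).unique hP).symm
  -- Step C : time derivative relation
  have e1 : deriv (fun s => w s z) t + partial_t u t r * deriv (fun y => w t y) z = 0 := by
    have hinner : HasDerivAt (fun s => (s, α * r + u s r)) (1, partial_t u t r) t :=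
      (hasDerivAt_id t).prodMk ((hut t r hr).hasDerivAt.const_add (α * r))
    have hg : HasDerivAt (fun s => w s (α * r + u s r))
        (fderiv ℝ f (t, z) (1, partial_t u t r)) t :=
      ((hfd (t, z)).hasFDerivAt.comp_hasDerivAt t hinner :)
    have hzero : fderiv ℝ f (t, z) (1, partial_t u t r) = 0 := by
      have hc : HasDerivAt (fun _ : ℝ => r ^ (m + 1) / (m + 1))
          (fderiv ℝ f (t, z) (1, partial_t u t r)) t :=
        hg.congr_of_eventuallyEq (Filter.Eventually.of_forall fun s => (hhod s r hr).symm)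
      exact hc.unique (hasDerivAt_const t _)
    have hsplit : fderiv ℝ f (t, z) (1, partial_t u t r)
        = fderiv ℝ f (t, z) (1, 0) + partial_t u t r * fderiv ℝ f (t, z) (0, 1) := by
      have h : ((1 : ℝ), partial_t u t r)
          = ((1 : ℝ), (0 : ℝ)) + partial_t u t r • ((0 : ℝ), (1 : ℝ)) := by
        simp [Prod.ext_iff]
      rw [h, map_add, map_smul, smul_eq_mul]
    have hwt : HasDerivAt (fun s => w s z) (fderiv ℝ f (t, z) (1, 0)) t :=
      ((hfd (t, z)).hasFDerivAt.comp_hasDerivAt t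
        ((hasDerivAt_id t).prodMk (hasDerivAt_const t z)) :)
    have hwz : HasDerivAt (fun y => w t y) (fderiv ℝ f (t, z) (0, 1)) z :=
      (hfd (t, z)).hasFDerivAt.comp_hasDerivAt z
        ((hasDerivAt_const z t).prodMk (hasDerivAt_id z))
    rw [hwt.deriv, hwz.deriv, ← hsplit]
    exact hzero
  -- Assemble
  have e2 : deriv (fun y => w t y) z * (α + partial_r u t r) = r ^ m := by
    have := e2all r hr; rwa [← hz] at this
  have e5 : r ^ (m - 1) * r = r ^ m := by
    rw [← Real.rpow_add_one hr.ne' (m - 1), show m - 1 + 1 = m by ring]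
  have hA0 := hur t r hr
  have e4 : partial_t u t r * ((α + partial_r u t r) ^ 2 * r)
      = κ * (partial_rr u t r * r - m * (α + partial_r u t r))
        + a * ((α + partial_r u t r) ^ 2 * r) := by
    rw [hpde t r hr]; field_simp
  have hAne : (α + partial_r u t r) ^ 2 * r ≠ 0 := mul_ne_zero (pow_ne_zero 2 hA0) hr.ne'
  show deriv (fun s => w s z) t
      = κ * deriv (deriv (fun s => w t s)) z - a * deriv (fun s => w t s) z
  refine mul_right_cancel₀ hAne ?_
  linear_combination ((α + partial_r u t r) ^ 2 * r) * e1
    - deriv (fun y => w t y) z * e4 - (κ * r) * e3 + (κ * m) * e2 - (κ * m) * e5
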